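/- Consider the IDM interval estimates: given counts n : X → ℕ on a finite set X with total N = ∑_x n(x), and a real S > 0, the interval for p(x) is [n(x)/(N+S), (n(x)+S)/(N+S)]. Each such interval has width S/(N+S), independent of x; consequently, if an attacker knows S and observes the intervals, then N is determined by N = S·(1−w)/w where w is the interval width, and the counts n(x) are determined by n(x) = lower(x)·(N+S). -/

import Mathlib

/-- Lemma 3: the IDM intervals `[n x/(N+S), (n x + S)/(N+S)]` all
have width `S/(N+S)`, and if `S` is known, then the counts (and the sample size)
are identifiable from the intervals. -/
theorem idm_identifiable {X : Type*} [Fintype X] [Nonempty X]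
    (S : ℝ) (hS : 0 < S)
    (n₁ n₂ : X → ℕ) (N₁ N₂ : ℕ)
    (hN₁ : N₁ = ∑ x, n₁ x) (hN₂ : N₂ = ∑ x, n₂ x)
    (hN₁pos : 1 ≤ N₁) (hN₂pos : 1 ≤ N₂) :
    (∀ x : X, ((n₁ x : ℝ) + S) / (N₁ + S) - (n₁ x : ℝ) / (N₁ + S) = S / (N₁ + S)) ∧
    ((∀ x : X, (n₁ x : ℝ) / (N₁ + S) = (n₂ x : ℝ) / (N₂ + S) ∧
        ((n₁ x : ℝ) + S) / (N₁ + S) = ((n₂ x : ℝ) + S) / (N₂ + S)) →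
      N₁ = N₂ ∧ n₁ = n₂) := by
  have hD₁ : (0:ℝ) < (N₁ : ℝ) + S := by positivity
  have hD₂ : (0:ℝ) < (N₂ : ℝ) + S := by positivity
  constructor
  · intro x
    field_simp
    ring
  · intro h
    obtain x₀ := Classical.arbitrary X
    obtain ⟨hl, hu⟩ := h x₀
    have hw : S / ((N₁:ℝ) + S) = S / ((N₂:ℝ) + S) := by
      calc S / ((N₁:ℝ) + S)
          = ((n₁ x₀ : ℝ) + S) / (N₁ + S) - (n₁ x₀ : ℝ) / (N₁ + S) := by field_simp; ring
        _ = ((n₂ x₀ : ℝ) + S) / (N₂ + S) - (n₂ x₀ : ℝ) / (N₂ + S) := by rw [hl, hu]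
        _ = S / ((N₂:ℝ) + S) := by field_simp; ring
    have hNN : ((N₁:ℝ)) = (N₂:ℝ) := by
      field_simp at hw
      linarith
    have hN : N₁ = N₂ := Nat.cast_injective hNN
    refine ⟨hN, funext fun x => ?_⟩
    have hl := (h x).1
    rw [hNN] at hl
    field_simp at hl
    exact_mod_cast hl
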